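/- Let η̃ ∈ [0,1] and define δ₂(η̃) = √(2e+9)/(3(1-η̃)) for η̃ ∈ [0,1/3] and δ₂(η̃) = √(2e+9)/(6η̃) for η̃ ∈ (1/3,1]. Then for every ρ ≥ 0, the inequality 3ḡρe^{-ρ²}/√(9ρ²e^{-2ρ²}+1) < b̃₀(η̃) holds (where b̃₀(η̃) = 1/(1-η̃) on [0,1/3] and 1/(2η̃) on (1/3,1]) if and only if ḡ < δ₂(η̃). -/

import Mathlib

/-- The strong-convexity bound b̃₀ of the slippery-cross-slope metric. -/
noncomputable def btilde0 (η : ℝ) : ℝ := if η ≤ 1/3 then 1/(1-η) else 1/(2*η)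

/-- The admissible rescaled gravity bound δ₂ on the Gaussian bell-shaped hillside. -/
noncomputable def delta2 (η : ℝ) : ℝ :=
  if η ≤ 1/3 then Real.sqrt (2 * Real.exp 1 + 9) / (3*(1-η))
  else Real.sqrt (2 * Real.exp 1 + 9) / (6*η)

/-- the gravitational wind force on the Gaussian bell stays below
b̃₀(η̃) at every radius ρ ≥ 0 iff ḡ < δ₂(η̃). -/
theorem stmt_17 (η : ℝ) (hη : η ∈ Set.Icc (0:ℝ) 1) (g : ℝ) (hg : 0 < g) :
    (∀ ρ : ℝ, 0 ≤ ρ →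
      3 * g * ρ * Real.exp (-ρ^2) / Real.sqrt (9 * ρ^2 * Real.exp (-2*ρ^2) + 1)
        < btilde0 η)
    ↔ g < delta2 η := by
  obtain ⟨h0, h1⟩ := hη
  have he : 0 < Real.exp 1 := Real.exp_pos 1
  set e : ℝ := Real.exp 1 with he_def
  set s : ℝ := Real.sqrt (2 * e + 9) with hs_def
  have hs2 : s ^ 2 = 2 * e + 9 := Real.sq_sqrt (by positivity)
  have hs : 0 < s := Real.sqrt_pos.mpr (by positivity)
  have hb : 0 < btilde0 η := by
    unfold btilde0
    split <;> rename_i h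
    · have : (0:ℝ) < 1 - η := by linarith
      positivity
    · push_neg at h
      have : (0:ℝ) < η := by linarith
      positivity
  have hdelta : delta2 η = btilde0 η * s / 3 := by
    unfold delta2 btilde0
    split <;> rename_i h
    · have h1' : (1:ℝ) - η ≠ 0 := by intro hc; rw [sub_eq_zero] at hc; linarith [h]
      field_simp
      rw [hs_def, he_def]
    · push_neg at h
      have h2' : η ≠ 0 := by intro hc; rw [hc] at h; norm_num at h
      field_simp
      rw [hs_def, he_def]; ring
  have hexpinv : Real.exp (-1 : ℝ) * e = 1 := by
    rw [he_def, ← Real.exp_add]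
    norm_num
  -- key upper bound at every radius
  have key : ∀ ρ : ℝ, 0 ≤ ρ →
      3 * g * ρ * Real.exp (-ρ^2) / Real.sqrt (9 * ρ^2 * Real.exp (-2*ρ^2) + 1)
        ≤ 3 * g / s := by
    intro ρ hρ
    set t : ℝ := ρ * Real.exp (-ρ^2) with ht_def
    have ht0 : 0 ≤ t := by positivity
    have hexp2 : Real.exp (-2*ρ^2) = Real.exp (-ρ^2) ^ 2 := by
      rw [show (-2*ρ^2) = (-ρ^2) + (-ρ^2) by ring, Real.exp_add, sq]
      ring
    have h1' : t ^ 2 = ρ^2 * Real.exp (-2*ρ^2) := by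
      rw [ht_def, mul_pow, hexp2]
    have ht2 : t ^ 2 * (2 * e) ≤ 1 := by
      have hx : (2*ρ^2) ≤ Real.exp (2*ρ^2 - 1) := by
        have := Real.add_one_le_exp (2*ρ^2 - 1); linarith
      have h2' : (2*ρ^2) * Real.exp (-2*ρ^2) ≤ Real.exp (2*ρ^2-1) * Real.exp (-2*ρ^2) :=
        mul_le_mul_of_nonneg_right hx (Real.exp_pos _).le
      have h3' : Real.exp (2*ρ^2-1) * Real.exp (-2*ρ^2) = Real.exp (-1 : ℝ) := by
        rw [← Real.exp_add]; ring_nf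
      nlinarith [Real.exp_pos (-2*ρ^2), he, h1']
    have hrw : 9 * ρ^2 * Real.exp (-2*ρ^2) + 1 = 9 * t^2 + 1 := by
      rw [h1']; ring
    have hnum : 3 * g * ρ * Real.exp (-ρ^2) = 3 * g * t := by rw [ht_def]; ring
    rw [hrw, hnum]
    have hden : t * s ≤ Real.sqrt (9*t^2+1) := by
      rw [show t*s = Real.sqrt ((t*s)^2) from (Real.sqrt_sq (by positivity)).symm]
      apply Real.sqrt_le_sqrt
      nlinarith [hs2, ht2]
    have hdpos : (0:ℝ) < Real.sqrt (9*t^2+1) := Real.sqrt_pos.mpr (by positivity)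
    rw [div_le_div_iff₀ hdpos hs]
    calc 3*g*t*s = 3*g*(t*s) := by ring
      _ ≤ 3*g*Real.sqrt (9*t^2+1) :=
          mul_le_mul_of_nonneg_left hden (by positivity)
  -- value at ρ₀ = √(1/2)
  set ρ₀ : ℝ := Real.sqrt (1/2) with hρ₀_def
  have hρ₀pos : 0 < ρ₀ := Real.sqrt_pos.mpr (by norm_num)
  have hρ₀sq : ρ₀ ^ 2 = 1/2 := Real.sq_sqrt (by norm_num)
  have hval : 3 * g * ρ₀ * Real.exp (-ρ₀^2) / Real.sqrt (9 * ρ₀^2 * Real.exp (-2*ρ₀^2) + 1)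
      = 3 * g / s := by
    set t : ℝ := ρ₀ * Real.exp (-ρ₀^2) with ht_def
    have ht0 : 0 < t := by positivity
    have hexp2 : Real.exp (-2*ρ₀^2) = Real.exp (-ρ₀^2) ^ 2 := by
      rw [show (-2*ρ₀^2) = (-ρ₀^2) + (-ρ₀^2) by ring, Real.exp_add, sq]
      ring
    have ht2 : t ^ 2 = (1/2) * Real.exp (-1 : ℝ) := by
      rw [ht_def, mul_pow, ← hexp2, hρ₀sq]
      norm_num
    have hrw : 9 * ρ₀^2 * Real.exp (-2*ρ₀^2) + 1 = 9 * t^2 + 1 := by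
      rw [ht_def, mul_pow, hexp2]; ring
    have hsq : (t*s)^2 = 9*t^2+1 := by
      nlinarith [hs2, ht2, hexpinv]
    have hsqrt : Real.sqrt (9*t^2+1) = t*s := by
      rw [← hsq, Real.sqrt_sq (by positivity)]
    have hnum : 3 * g * ρ₀ * Real.exp (-ρ₀^2) = 3 * g * t := by rw [ht_def]; ring
    rw [hrw, hnum, hsqrt]
    field_simp
  rw [hdelta]
  constructor
  · intro h
    have h2 := h ρ₀ hρ₀pos.le
    rw [hval, div_lt_iff₀ hs] at h2
    linarith
  · intro h ρ hρ
    refine lt_of_le_of_lt (key ρ hρ) ?_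
    rw [div_lt_iff₀ hs]
    linarith
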